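/- Let b > 0. Then ∫₀^∞ ∫₀^∞ (λ − e^{2πbk} − e^{2πby})₊ dk dy = λ(log λ)²/(2πb)² + O(λ log λ) as λ → ∞. -/

import Mathlib

open Real MeasureTheory Set

theorem phase_space_asymptotics (b : ℝ) (hb : 0 < b) :
    ∃ C Λ : ℝ, 0 < C ∧ 0 < Λ ∧ ∀ lam : ℝ, Λ ≤ lam →
      |(∫ y in Set.Ioi (0:ℝ), ∫ k in Set.Ioi (0:ℝ),
          max (lam - Real.exp (2 * π * b * k) - Real.exp (2 * π * b * y)) 0)
        - lam * (Real.log lam)^2 / (2 * π * b)^2|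
      ≤ C * lam * Real.log lam := by
  have hπ := Real.pi_pos
  set a : ℝ := 2 * π * b with ha
  have hA : 0 < a := by positivity
  refine ⟨3 / a ^ 2, 3, by positivity, by norm_num, ?_⟩
  intro lam hlam
  have hlam0 : (0:ℝ) < lam := by linarith
  have hL1 : 1 ≤ Real.log lam := by
    have h3 : Real.exp 1 ≤ 3 := by nlinarith [Real.exp_one_lt_d9]
    calc (1:ℝ) = Real.log (Real.exp 1) := (Real.log_exp 1).symm
      _ ≤ Real.log lam := Real.log_le_log (Real.exp_pos 1) (by linarith)
  set L : ℝ := Real.log lam with hLdef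
  set K0 : ℝ := L / a with hK0def
  set K : ℝ := Real.log (lam / 2) / a with hKdef
  have hlog2pos : 0 < Real.log 2 := Real.log_pos (by norm_num)
  have hlog2lt : Real.log 2 < 0.6931471808 := Real.log_two_lt_d9
  have hKL : K = (L - Real.log 2) / a := by
    rw [hKdef, Real.log_div (by linarith) (by norm_num), hLdef]
  have hK0pos : 0 < K0 := div_pos (by linarith) hA
  have hKpos : 0 < K := by rw [hKL]; exact div_pos (by linarith) hA
  have hexpK : Real.exp (a * K) = lam / 2 := by
    have h1 : a * K = Real.log (lam / 2) := by rw [hKdef]; field_simp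
    rw [h1, Real.exp_log (by linarith)]
  have hexpK0 : Real.exp (a * K0) = lam := by
    have h1 : a * K0 = Real.log lam := by rw [hK0def, hLdef]; field_simp
    rw [h1, Real.exp_log hlam0]
  clear_value a L K0 K
  -- the integrand
  set f : ℝ → ℝ → ℝ := fun y k => max (lam - Real.exp (a * k) - Real.exp (a * y)) 0
    with hfdef
  have hf_nonneg : ∀ y k, 0 ≤ f y k := fun y k => le_max_right _ _
  have hf_le_lam : ∀ y k, f y k ≤ lam := fun y k =>
    max_le (by nlinarith [Real.exp_pos (a * k), Real.exp_pos (a * y)]) hlam0.le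
  have hf_zero_k : ∀ y k, K0 ≤ k → f y k = 0 := by
    intro y k hk
    have h1 : lam ≤ Real.exp (a * k) := by
      rw [← hexpK0]
      exact Real.exp_le_exp.2 (mul_le_mul_of_nonneg_left hk hA.le)
    have h2 := Real.exp_pos (a * y)
    exact max_eq_right (by linarith)
  have hf_zero_y : ∀ y k, K0 ≤ y → f y k = 0 := by
    intro y k hy
    have h1 : lam ≤ Real.exp (a * y) := by
      rw [← hexpK0]
      exact Real.exp_le_exp.2 (mul_le_mul_of_nonneg_left hy hA.le)
    have h2 := Real.exp_pos (a * k)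
    exact max_eq_right (by linarith)
  have hcont : Continuous (Function.uncurry f) := by
    apply Continuous.max _ continuous_const
    fun_prop
  have hconty : ∀ y, Continuous (f y) := by
    intro y; apply Continuous.max _ continuous_const; fun_prop
  have hfy_int : ∀ y, IntegrableOn (f y) (Ioi 0) := by
    intro y
    have h1 : IntegrableOn (f y) (Ioc 0 K0) := (hconty y).integrableOn_Ioc
    have h2 : IntegrableOn (f y) (Ioi K0) := by
      have heq : EqOn (f y) (fun _ => (0:ℝ)) (Ioi K0) :=
        fun k hk => hf_zero_k y k (mem_Ioi.mp hk).le
      exact (integrableOn_congr_fun heq measurableSet_Ioi).2 integrableOn_zero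
    refine (h1.union h2).mono_set fun k hk => ?_
    rcases le_or_gt k K0 with h | h
    · exact Or.inl ⟨hk, h⟩
    · exact Or.inr h
  set G : ℝ → ℝ := fun y => ∫ k in Ioi (0:ℝ), f y k with hGdef
  have hG_nonneg : ∀ y, 0 ≤ G y := fun y =>
    setIntegral_nonneg measurableSet_Ioi fun k _ => hf_nonneg y k
  -- auxiliary: indicator integrability and value
  have hind_int : ∀ c : ℝ, IntegrableOn ((Ioc (0:ℝ) K0).indicator fun _ => c) (Ioi 0) := by
    intro c
    rw [IntegrableOn, integrable_indicator_iff measurableSet_Ioc]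
    refine integrableOn_const (ne_of_lt ?_)
    rw [Measure.restrict_apply measurableSet_Ioc]
    exact lt_of_le_of_lt (measure_mono inter_subset_left) measure_Ioc_lt_top
  have hind_val : ∀ c : ℝ, (∫ k in Ioi (0:ℝ), (Ioc (0:ℝ) K0).indicator (fun _ => c) k) = K0 * c := by
    intro c
    rw [setIntegral_indicator measurableSet_Ioc,
      inter_eq_self_of_subset_right Ioc_subset_Ioi_self, setIntegral_const,
      measureReal_def, Real.volume_Ioc, ENNReal.toReal_ofReal (by linarith), smul_eq_mul, sub_zero]
  have hG_le : ∀ y, G y ≤ lam * K0 := by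
    intro y
    calc G y ≤ ∫ k in Ioi (0:ℝ), (Ioc (0:ℝ) K0).indicator (fun _ => lam) k := by
          refine setIntegral_mono_on (hfy_int y) (hind_int lam) measurableSet_Ioi fun k hk => ?_
          rcases le_or_gt k K0 with h | h
          · rw [indicator_of_mem (mem_Ioc.mpr ⟨mem_Ioi.mp hk, h⟩)]; exact hf_le_lam y k
          · rw [indicator_of_notMem (fun hm => absurd hm.2 (not_le.2 h)), hf_zero_k y k h.le]
      _ = K0 * lam := hind_val lam
      _ = lam * K0 := mul_comm _ _
  have hG_zero : ∀ y, K0 ≤ y → G y = 0 := by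
    intro y hy
    have h : ∀ k, f y k = 0 := fun k => hf_zero_y y k hy
    simp only [hGdef, h, integral_zero]
  have hG_meas : StronglyMeasurable G :=
    hcont.stronglyMeasurable.integral_prod_right (ν := volume.restrict (Ioi 0))
  have hG_int : IntegrableOn G (Ioi 0) := by
    have h1 : IntegrableOn G (Ioc 0 K0) := by
      refine Measure.integrableOn_of_bounded measure_Ioc_lt_top.ne
        hG_meas.aestronglyMeasurable (M := lam * K0) (ae_of_all _ fun y => ?_)
      rw [Real.norm_of_nonneg (hG_nonneg y)]
      exact hG_le y
    have h2 : IntegrableOn G (Ioi K0) := by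
      have heq : EqOn G (fun _ => (0:ℝ)) (Ioi K0) :=
        fun y hy => hG_zero y (mem_Ioi.mp hy).le
      exact (integrableOn_congr_fun heq measurableSet_Ioi).2 integrableOn_zero
    refine (h1.union h2).mono_set fun y hy => ?_
    rcases le_or_gt y K0 with h | h
    · exact Or.inl ⟨hy, h⟩
    · exact Or.inr h
  -- the exponential integral
  have hExpInt : ∀ T : ℝ, ∫ k in (0:ℝ)..T, Real.exp (a * k) = (Real.exp (a * T) - 1) / a := by
    intro T
    have hD : ∀ x ∈ uIcc (0:ℝ) T, HasDerivAt (fun x => Real.exp (a * x) / a)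
        (Real.exp (a * x)) x := by
      intro x _
      have h1 : HasDerivAt (fun x : ℝ => a * x) a x := by
        simpa using (hasDerivAt_id x).const_mul a
      have h2 := ((Real.hasDerivAt_exp (a * x)).comp x h1).div_const a
      exact h2.congr_deriv (by field_simp)
    rw [intervalIntegral.integral_eq_sub_of_hasDerivAt hD
      ((by fun_prop : Continuous fun k => Real.exp (a * k)).intervalIntegrable _ _)]
    rw [mul_zero, Real.exp_zero]
    ring
  have hExpBound : (Real.exp (a * K) - 1) / a ≤ lam / (2 * a) := by
    rw [hexpK]
    rw [div_le_div_iff₀ hA (by positivity)]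
    nlinarith
  -- lower bound for inner integral
  have hG_lb : ∀ y ∈ Ioc 0 K, K * lam - lam / (2 * a) - K * Real.exp (a * y) ≤ G y := by
    intro y _
    have hi1 : IntegrableOn (fun k => lam - Real.exp (a * k) - Real.exp (a * y)) (Ioc 0 K) :=
      (by fun_prop : Continuous fun k => lam - Real.exp (a * k) - Real.exp (a * y)).integrableOn_Ioc
    have step1 : ∫ k in Ioc (0:ℝ) K, (lam - Real.exp (a * k) - Real.exp (a * y))
        ≤ ∫ k in Ioc (0:ℝ) K, f y k :=
      setIntegral_mono_on hi1 ((hfy_int y).mono_set Ioc_subset_Ioi_self) measurableSet_Ioc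
        fun k _ => le_max_left _ _
    have step2 : ∫ k in Ioc (0:ℝ) K, f y k ≤ G y :=
      setIntegral_mono_set (hfy_int y) (ae_of_all _ fun k => hf_nonneg y k)
        Ioc_subset_Ioi_self.eventuallyLE
    have hval : ∫ k in Ioc (0:ℝ) K, (lam - Real.exp (a * k) - Real.exp (a * y))
        = K * lam - (Real.exp (a * K) - 1) / a - K * Real.exp (a * y) := by
      rw [← intervalIntegral.integral_of_le hKpos.le]
      have hie : IntervalIntegrable (fun k => Real.exp (a * k)) volume 0 K :=
        (by fun_prop : Continuous fun k => Real.exp (a * k)).intervalIntegrable _ _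
      have hie2 : IntervalIntegrable (fun k => lam - Real.exp (a * k)) volume 0 K :=
        (by fun_prop : Continuous fun k => lam - Real.exp (a * k)).intervalIntegrable _ _
      rw [intervalIntegral.integral_sub hie2 intervalIntegrable_const,
        intervalIntegral.integral_sub intervalIntegrable_const hie,
        intervalIntegral.integral_const, intervalIntegral.integral_const, hExpInt K]
      simp only [smul_eq_mul]
      ring
    linarith [step1, step2, hval.ge, hval.le, hExpBound]
  -- lower bound for the full integral
  have hIlb : K ^ 2 * lam - K * lam / a ≤ ∫ y in Ioi (0:ℝ), G y := by
    have s1 : ∫ y in Ioc (0:ℝ) K, G y ≤ ∫ y in Ioi (0:ℝ), G y :=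
      setIntegral_mono_set hG_int (ae_of_all _ hG_nonneg) Ioc_subset_Ioi_self.eventuallyLE
    have s2 : ∫ y in Ioc (0:ℝ) K, (K * lam - lam / (2 * a) - K * Real.exp (a * y))
        ≤ ∫ y in Ioc (0:ℝ) K, G y :=
      setIntegral_mono_on
        ((by fun_prop : Continuous fun y => K * lam - lam / (2 * a) - K * Real.exp (a * y)).integrableOn_Ioc)
        (hG_int.mono_set Ioc_subset_Ioi_self) measurableSet_Ioc hG_lb
    have s3 : ∫ y in Ioc (0:ℝ) K, (K * lam - lam / (2 * a) - K * Real.exp (a * y))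
        = K * (K * lam - lam / (2 * a)) - K * ((Real.exp (a * K) - 1) / a) := by
      rw [← intervalIntegral.integral_of_le hKpos.le]
      have hie : IntervalIntegrable (fun y => Real.exp (a * y)) volume 0 K :=
        (by fun_prop : Continuous fun y => Real.exp (a * y)).intervalIntegrable _ _
      rw [intervalIntegral.integral_sub intervalIntegrable_const (hie.const_mul K),
        intervalIntegral.integral_const, intervalIntegral.integral_const_mul, hExpInt K]
      simp only [smul_eq_mul]
      ring
    have h4 := mul_le_mul_of_nonneg_left hExpBound hKpos.le
    have h5 : K * lam / a = K * (lam / (2 * a)) + K * (lam / (2 * a)) := by ring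
    have h7 : K * (K * lam - lam / (2 * a)) = K ^ 2 * lam - K * (lam / (2 * a)) := by ring
    linarith [s1, s2, s3.ge, s3.le, h4, h5, h7]
  -- upper bound for the full integral
  have hIub : ∫ y in Ioi (0:ℝ), G y ≤ K0 * (lam * K0) := by
    calc ∫ y in Ioi (0:ℝ), G y
        ≤ ∫ y in Ioi (0:ℝ), (Ioc (0:ℝ) K0).indicator (fun _ => lam * K0) y := by
          refine setIntegral_mono_on hG_int (hind_int (lam * K0)) measurableSet_Ioi fun y hy => ?_
          rcases le_or_gt y K0 with h | h
          · rw [indicator_of_mem (mem_Ioc.mpr ⟨mem_Ioi.mp hy, h⟩)]; exact hG_le y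
          · rw [indicator_of_notMem (fun hm => absurd hm.2 (not_le.2 h)), hG_zero y h.le]
      _ = K0 * (lam * K0) := hind_val (lam * K0)
  have hIeq : (∫ y in Set.Ioi (0:ℝ), ∫ k in Set.Ioi (0:ℝ),
      max (lam - Real.exp (a * k) - Real.exp (a * y)) 0) = ∫ y in Ioi (0:ℝ), G y := rfl
  rw [hIeq]
  have hub : ∫ y in Ioi (0:ℝ), G y ≤ lam * L ^ 2 / a ^ 2 := by
    refine hIub.trans_eq ?_
    rw [hK0def]
    ring
  have key : lam * L ^ 2 / a ^ 2 - 3 / a ^ 2 * lam * L ≤ K ^ 2 * lam - K * lam / a := by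
    rw [hKL]
    have hnum : lam * L ^ 2 - 3 * lam * L
        ≤ lam * (L - Real.log 2) ^ 2 - lam * (L - Real.log 2) := by
      nlinarith [mul_nonneg (mul_nonneg hlam0.le (by linarith : (0:ℝ) ≤ L))
          (by linarith : (0:ℝ) ≤ 1 - Real.log 2),
        mul_nonneg hlam0.le (mul_self_nonneg (Real.log 2)),
        mul_nonneg hlam0.le hlog2pos.le]
    calc lam * L ^ 2 / a ^ 2 - 3 / a ^ 2 * lam * L
        = (lam * L ^ 2 - 3 * lam * L) / a ^ 2 := by ring
      _ ≤ (lam * (L - Real.log 2) ^ 2 - lam * (L - Real.log 2)) / a ^ 2 := by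
          gcongr
      _ = ((L - Real.log 2) / a) ^ 2 * lam - (L - Real.log 2) / a * lam / a := by
          ring
  have hCL : 0 ≤ 3 / a ^ 2 * lam * L := by positivity
  rw [abs_le]
  constructor
  · linarith [key.trans hIlb]
  · linarith [hub]
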